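/- Assume V satisfies (V₁) or (V₂) and let 0 < a < a*. For c > 0 define I_c(a) = inf{E_a(u) : u ∈ H^{1/2}(ℝ³), ‖u‖_{L²}² = c}. Then I_c(a) = c·I(ac) for all c > 0, the function c ↦ I_c(a) is concave on (0,1), and hence c ↦ I_c(a) is uniformly continuous on (0,1). -/

import Mathlib

noncomputable section

open MeasureTheory Filter Topology Real

/-- Euclidean space `ℝ³`. -/
abbrev E3 : Type := EuclideanSpace ℝ (Fin 3)

/-- The Fourier transform `û` of a function `u : ℝ³ → ℂ`. -/
def FT (u : E3 → ℂ) : E3 → ℂ := FourierTransform.fourier u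

/-- `u` belongs to `H^{1/2}(ℝ³)`:  `u ∈ L²` and `∫ √(1+|ξ|²) |û(ξ)|² dξ < ∞`. -/
def InH12 (u : E3 → ℂ) : Prop :=
  MemLp u 2 (volume : Measure E3) ∧
    Integrable (fun ξ : E3 => Real.sqrt (1 + ‖ξ‖ ^ 2) * ‖FT u ξ‖ ^ 2)

/-- The squared `H^{1/2}` norm `∫ √(1+|ξ|²) |û(ξ)|² dξ`. -/
def H12normSq (u : E3 → ℂ) : ℝ :=
  ∫ ξ : E3, Real.sqrt (1 + ‖ξ‖ ^ 2) * ‖FT u ξ‖ ^ 2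

/-- The kinetic energy `‖(-Δ+m²)^{1/4} u‖_{L²}² = ∫ √(|ξ|²+m²) |û(ξ)|² dξ`. -/
def kinetic (m : ℝ) (u : E3 → ℂ) : ℝ :=
  ∫ ξ : E3, Real.sqrt (‖ξ‖ ^ 2 + m ^ 2) * ‖FT u ξ‖ ^ 2

/-- `‖(-Δ)^{1/4} u‖_{L²}² = ∫ |ξ| |û(ξ)|² dξ`. -/
def gradHalfSq (u : E3 → ℂ) : ℝ := ∫ ξ : E3, ‖ξ‖ * ‖FT u ξ‖ ^ 2

/-- `‖(-Δ)^{-1/4} u‖_{L²}² = ∫ |ξ|⁻¹ |û(ξ)|² dξ`. -/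
def negQuarterSq (u : E3 → ℂ) : ℝ := ∫ ξ : E3, ‖ξ‖⁻¹ * ‖FT u ξ‖ ^ 2

/-- Squared `L²` mass `∫ |u|²`. -/
def massSq (u : E3 → ℂ) : ℝ := ∫ x : E3, ‖u x‖ ^ 2

/-- Potential energy `∫ V |u|²`. -/
def potentialE (V : E3 → ℝ) (u : E3 → ℂ) : ℝ := ∫ x : E3, V x * ‖u x‖ ^ 2

/-- The interaction term `∬ |u(x)|²|u(y)|² |x-y|⁻¹ dx dy`. -/
def interaction (u : E3 → ℂ) : ℝ :=
  ∫ x : E3, ∫ y : E3, ‖u x‖ ^ 2 * ‖u y‖ ^ 2 / ‖x - y‖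

/-- The pseudo-relativistic Hartree energy functional `E_a(u)`. -/
def energy (m : ℝ) (V : E3 → ℝ) (a : ℝ) (u : E3 → ℂ) : ℝ :=
  kinetic m u + potentialE V u - a / 2 * interaction u

/-- The ground-state energy `I(a)`. -/
def Ival (m : ℝ) (V : E3 → ℝ) (a : ℝ) : ℝ :=
  sInf {e : ℝ | ∃ u : E3 → ℂ, InH12 u ∧ massSq u = 1 ∧ e = energy m V a u}

/-- The variational problem with mass `c`: `I_c(a)`. -/
def IvalMass (m : ℝ) (V : E3 → ℝ) (a : ℝ) (c : ℝ) : ℝ :=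
  sInf {e : ℝ | ∃ u : E3 → ℂ, InH12 u ∧ massSq u = c ∧ e = energy m V a u}

/-- `u` is a minimizer for `I(a)`. -/
def IsMinimizer (m : ℝ) (V : E3 → ℝ) (a : ℝ) (u : E3 → ℂ) : Prop :=
  InH12 u ∧ massSq u = 1 ∧ energy m V a u = Ival m V a

/-- The Chandrasekhar limit `a*`: the largest constant such that
`‖(-Δ)^{1/4}u‖² ‖u‖² ≥ (a/2) ∬ |u(x)|²|u(y)|²|x-y|⁻¹`. -/
def aStar : ℝ :=
  sSup {a : ℝ | ∀ u : E3 → ℂ, InH12 u →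
    a / 2 * interaction u ≤ gradHalfSq u * massSq u}

/-- The operator `√(-Δ)` acting via the Fourier transform. -/
def sqrtLap (u : E3 → ℂ) : E3 → ℂ :=
  FourierTransformInv.fourierInv (fun ξ : E3 => (‖ξ‖ : ℂ) * FT u ξ)

/-- The set `𝒢` of positive, radially symmetric, decreasing optimizers `Q`. -/
def Gset : Set (E3 → ℂ) :=
  {Q | InH12 Q ∧
    (∀ x : E3, (Q x).im = 0 ∧ 0 < (Q x).re) ∧
    (∀ x y : E3, ‖x‖ = ‖y‖ → Q x = Q y) ∧
    (∀ x y : E3, ‖x‖ ≤ ‖y‖ → (Q y).re ≤ (Q x).re) ∧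
    massSq Q = 1 ∧ gradHalfSq Q = 1 ∧ aStar / 2 * interaction Q = 1 ∧
    (∀ x : E3,
      sqrtLap Q x + Q x
        - (aStar : ℂ) * ((∫ y : E3, ‖Q y‖ ^ 2 / ‖x - y‖ : ℝ) : ℂ) * Q x = 0)}

/-- Condition (V₁): `0 ≤ V ∈ L^∞_loc` is trapping. -/
def V1cond (V : E3 → ℝ) : Prop :=
  Measurable V ∧ (∀ x, 0 ≤ V x) ∧
    (∀ R : ℝ, ∃ C : ℝ, ∀ x : E3, ‖x‖ ≤ R → V x ≤ C) ∧
    Tendsto V (Filter.cocompact E3) atTop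

/-- Condition (V₂): `0 ≤ V` is continuous and `ℤ³`-periodic. -/
def V2cond (V : E3 → ℝ) : Prop :=
  Continuous V ∧ (∀ x, 0 ≤ V x) ∧
    ∀ (x : E3) (z : Fin 3 → ℤ), V (WithLp.toLp 2 (fun i => x i + (z i : ℝ))) = V x

section AuxStmt13

lemma FT_cmul (u : E3 → ℂ) (r : ℂ) :
    FT (fun x => r * u x) = fun ξ => r * FT u ξ := by
  funext ξ
  unfold FT
  rw [Real.fourier_eq, Real.fourier_eq, ← integral_const_mul]
  congr 1
  funext x
  rw [Circle.smul_def, Circle.smul_def, smul_eq_mul, smul_eq_mul]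
  ring

lemma interaction_nonneg (u : E3 → ℂ) : 0 ≤ interaction u :=
  integral_nonneg fun x => integral_nonneg fun y => by positivity

lemma massSq_nonneg (u : E3 → ℂ) : 0 ≤ massSq u :=
  integral_nonneg fun x => by positivity

lemma gradHalfSq_nonneg (u : E3 → ℂ) : 0 ≤ gradHalfSq u :=
  integral_nonneg fun ξ => by positivity

lemma kinetic_nonneg (m : ℝ) (u : E3 → ℂ) : 0 ≤ kinetic m u :=
  integral_nonneg fun ξ => by positivity

lemma potentialE_nonneg (V : E3 → ℝ) (hV0 : ∀ x, 0 ≤ V x) (u : E3 → ℂ) :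
    0 ≤ potentialE V u :=
  integral_nonneg fun x => mul_nonneg (hV0 x) (by positivity)

lemma massSq_cmul (u : E3 → ℂ) (r : ℝ) :
    massSq (fun x => (r : ℂ) * u x) = r ^ 2 * massSq u := by
  unfold massSq
  rw [← integral_const_mul]
  congr 1; funext x
  simp only [norm_mul, Complex.norm_real, Real.norm_eq_abs, mul_pow, sq_abs]

lemma weighted_cmul (w : E3 → ℝ) (u : E3 → ℂ) (r : ℝ) :
    (∫ ξ : E3, w ξ * ‖FT (fun x => (r : ℂ) * u x) ξ‖ ^ 2) =
      r ^ 2 * ∫ ξ : E3, w ξ * ‖FT u ξ‖ ^ 2 := by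
  rw [← integral_const_mul]
  congr 1; funext ξ
  simp only [FT_cmul, norm_mul, Complex.norm_real, Real.norm_eq_abs, mul_pow, sq_abs]
  ring

lemma kinetic_cmul (m : ℝ) (u : E3 → ℂ) (r : ℝ) :
    kinetic m (fun x => (r : ℂ) * u x) = r ^ 2 * kinetic m u :=
  weighted_cmul _ u r

lemma gradHalfSq_cmul (u : E3 → ℂ) (r : ℝ) :
    gradHalfSq (fun x => (r : ℂ) * u x) = r ^ 2 * gradHalfSq u :=
  weighted_cmul _ u r

lemma potentialE_cmul (V : E3 → ℝ) (u : E3 → ℂ) (r : ℝ) :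
    potentialE V (fun x => (r : ℂ) * u x) = r ^ 2 * potentialE V u := by
  unfold potentialE
  rw [← integral_const_mul]
  congr 1; funext x
  simp only [norm_mul, Complex.norm_real, Real.norm_eq_abs, mul_pow, sq_abs]
  ring

lemma interaction_cmul (u : E3 → ℂ) (r : ℝ) :
    interaction (fun x => (r : ℂ) * u x) = r ^ 4 * interaction u := by
  unfold interaction
  rw [← integral_const_mul]
  congr 1; funext x
  rw [← integral_const_mul]
  congr 1; funext y
  simp only [norm_mul, Complex.norm_real, Real.norm_eq_abs, mul_pow, sq_abs]
  ring

lemma InH12_cmul (u : E3 → ℂ) (hu : InH12 u) (r : ℝ) :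
    InH12 (fun x => (r : ℂ) * u x) := by
  refine ⟨hu.1.const_mul _, ?_⟩
  have h : (fun ξ : E3 => Real.sqrt (1 + ‖ξ‖ ^ 2) * ‖FT (fun x => (r : ℂ) * u x) ξ‖ ^ 2)
      = fun ξ : E3 => r ^ 2 * (Real.sqrt (1 + ‖ξ‖ ^ 2) * ‖FT u ξ‖ ^ 2) := by
    funext ξ
    simp only [FT_cmul, norm_mul, Complex.norm_real, Real.norm_eq_abs, mul_pow, sq_abs]
    ring
  rw [h]
  exact hu.2.const_mul _

/-- The scaled variational set `{c · E_{ac}(v) : ‖v‖² = 1}`. -/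
def Dset (m : ℝ) (V : E3 → ℝ) (a : ℝ) (c : ℝ) : Set ℝ :=
  {e : ℝ | ∃ v : E3 → ℂ, InH12 v ∧ massSq v = 1 ∧ e = c * energy m V (a * c) v}

lemma S_image (m : ℝ) (V : E3 → ℝ) (a c : ℝ) (hc : 0 < c) :
    {e : ℝ | ∃ u : E3 → ℂ, InH12 u ∧ massSq u = c ∧ e = energy m V a u}
      = Dset m V a c := by
  have hs0 : Real.sqrt c ≠ 0 := by positivity
  have h2 : Real.sqrt c ^ 2 = c := Real.sq_sqrt hc.le
  have h4 : Real.sqrt c ^ 4 = c ^ 2 := by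
    rw [show (4 : ℕ) = 2 * 2 from rfl, pow_mul, h2]
  ext e
  constructor
  · rintro ⟨u, hu, hmc, rfl⟩
    refine ⟨fun x => (((Real.sqrt c)⁻¹ : ℝ) : ℂ) * u x, InH12_cmul u hu _, ?_, ?_⟩
    · rw [massSq_cmul, hmc, inv_pow, h2]
      exact inv_mul_cancel₀ hc.ne'
    · unfold energy
      rw [kinetic_cmul, potentialE_cmul, interaction_cmul, inv_pow, inv_pow, h2, h4]
      field_simp
  · rintro ⟨v, hv, hm1, rfl⟩
    refine ⟨fun x => ((Real.sqrt c : ℝ) : ℂ) * v x, InH12_cmul v hv _, ?_, ?_⟩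
    · rw [massSq_cmul, hm1, h2, mul_one]
    · unfold energy
      rw [kinetic_cmul, potentialE_cmul, interaction_cmul, h2, h4]
      ring

lemma exists_strict (a : ℝ) (ha0 : 0 < a) (ha : a < aStar) :
    ∃ b : ℝ, a < b ∧ ∀ u : E3 → ℂ, InH12 u →
      b / 2 * interaction u ≤ gradHalfSq u * massSq u := by
  have h0 : (0 : ℝ) ∈ {a : ℝ | ∀ u : E3 → ℂ, InH12 u →
      a / 2 * interaction u ≤ gradHalfSq u * massSq u} := by
    intro u hu
    rw [zero_div, zero_mul]
    exact mul_nonneg (gradHalfSq_nonneg u) (massSq_nonneg u)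
  have hne : {a : ℝ | ∀ u : E3 → ℂ, InH12 u →
      a / 2 * interaction u ≤ gradHalfSq u * massSq u}.Nonempty := ⟨0, h0⟩
  have hbdd : BddAbove {a : ℝ | ∀ u : E3 → ℂ, InH12 u →
      a / 2 * interaction u ≤ gradHalfSq u * massSq u} := by
    by_contra h
    have h1 : aStar = 0 := Real.sSup_of_not_bddAbove h
    rw [h1] at ha
    linarith
  obtain ⟨b, hbS, hab⟩ := exists_lt_of_lt_csSup hne ha
  exact ⟨b, hab, hbS⟩

lemma aesm_FTnormSq (u : E3 → ℂ) (hu : InH12 u) :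
    AEStronglyMeasurable (fun ξ : E3 => ‖FT u ξ‖ ^ 2) (volume : Measure E3) := by
  have h := hu.2.aestronglyMeasurable
  have hc : Continuous fun ξ : E3 => (Real.sqrt (1 + ‖ξ‖ ^ 2))⁻¹ := by
    apply Continuous.inv₀
    · exact Real.continuous_sqrt.comp (by continuity)
    · intro ξ; positivity
  have heq : (fun ξ : E3 => ‖FT u ξ‖ ^ 2)
      = fun ξ : E3 => (Real.sqrt (1 + ‖ξ‖ ^ 2) * ‖FT u ξ‖ ^ 2) *
          (Real.sqrt (1 + ‖ξ‖ ^ 2))⁻¹ := by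
    funext ξ
    have h1 : Real.sqrt (1 + ‖ξ‖ ^ 2) ≠ 0 := by positivity
    rw [mul_comm (Real.sqrt (1 + ‖ξ‖ ^ 2)) _, mul_assoc, mul_inv_cancel₀ h1, mul_one]
  rw [heq]
  exact h.mul hc.aestronglyMeasurable

lemma sqrt1_le_aux (ξ : E3) : ‖ξ‖ ≤ Real.sqrt (1 + ‖ξ‖ ^ 2) := by
  have h := Real.sqrt_le_sqrt (show ‖ξ‖ ^ 2 ≤ 1 + ‖ξ‖ ^ 2 by linarith)
  rwa [Real.sqrt_sq (norm_nonneg ξ)] at h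

lemma integrable_grad (u : E3 → ℂ) (hu : InH12 u) :
    Integrable (fun ξ : E3 => ‖ξ‖ * ‖FT u ξ‖ ^ 2) := by
  refine hu.2.mono' (continuous_norm.aestronglyMeasurable.mul (aesm_FTnormSq u hu)) ?_
  filter_upwards with ξ
  rw [Real.norm_eq_abs, abs_of_nonneg (by positivity)]
  exact mul_le_mul_of_nonneg_right (sqrt1_le_aux ξ) (by positivity)

lemma integrable_kin (m : ℝ) (hm : 0 < m) (u : E3 → ℂ) (hu : InH12 u) :
    Integrable (fun ξ : E3 => Real.sqrt (‖ξ‖ ^ 2 + m ^ 2) * ‖FT u ξ‖ ^ 2) := by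
  refine (hu.2.const_mul (1 + m)).mono' ?_ ?_
  · exact ((Real.continuous_sqrt.comp (by continuity)).aestronglyMeasurable).mul
      (aesm_FTnormSq u hu)
  · filter_upwards with ξ
    rw [Real.norm_eq_abs, abs_of_nonneg (by positivity), ← mul_assoc]
    refine mul_le_mul_of_nonneg_right ?_ (by positivity)
    have h1 : Real.sqrt (‖ξ‖ ^ 2 + m ^ 2) ≤ Real.sqrt ((1 + m) ^ 2 * (1 + ‖ξ‖ ^ 2)) := by
      apply Real.sqrt_le_sqrt
      nlinarith [sq_nonneg ‖ξ‖, hm.le, sq_nonneg m, norm_nonneg ξ]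
    rwa [Real.sqrt_mul (by positivity) _, Real.sqrt_sq (by linarith)] at h1

lemma grad_le_kinetic (m : ℝ) (hm : 0 < m) (u : E3 → ℂ) (hu : InH12 u) :
    gradHalfSq u ≤ kinetic m u := by
  unfold gradHalfSq kinetic
  refine integral_mono (integrable_grad u hu) (integrable_kin m hm u hu) fun ξ => ?_
  refine mul_le_mul_of_nonneg_right ?_ (by positivity)
  have h := Real.sqrt_le_sqrt (show ‖ξ‖ ^ 2 ≤ ‖ξ‖ ^ 2 + m ^ 2 by nlinarith [sq_nonneg m])
  rwa [Real.sqrt_sq (norm_nonneg ξ)] at h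

lemma halfJ_le (m : ℝ) (hm : 0 < m) (V : E3 → ℝ) (hV0 : ∀ x, 0 ≤ V x)
    (a b : ℝ) (ha0 : 0 < a) (hab : a < b)
    (hb : ∀ u : E3 → ℂ, InH12 u → b / 2 * interaction u ≤ gradHalfSq u * massSq u)
    (v : E3 → ℂ) (hv : InH12 v) (h1 : massSq v = 1) :
    a / 2 * interaction v ≤ a / b * (kinetic m v + potentialE V v) := by
  have hb0 : 0 < b := lt_trans ha0 hab
  have h2 := hb v hv
  rw [h1, mul_one] at h2
  have h3 : gradHalfSq v ≤ kinetic m v := grad_le_kinetic m hm v hv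
  have h4 : kinetic m v ≤ kinetic m v + potentialE V v :=
    le_add_of_nonneg_right (potentialE_nonneg V hV0 v)
  have h5 : b / 2 * interaction v ≤ kinetic m v + potentialE V v := by linarith
  have h6 : a / 2 * interaction v = a / b * (b / 2 * interaction v) := by
    field_simp
  rw [h6]
  exact mul_le_mul_of_nonneg_left h5 (by positivity)

end AuxStmt13

open scoped Pointwise

set_option maxHeartbeats 1000000

/-- Scaling identity `I_c(a) = c·I(ac)`, concavity and uniform continuity
of `c ↦ I_c(a)` on `(0,1)`. -/
theorem stmt13 (m : ℝ) (hm : 0 < m) (V : E3 → ℝ) (hV : V1cond V ∨ V2cond V)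
    (a : ℝ) (ha0 : 0 < a) (ha : a < aStar) :
    (∀ c : ℝ, 0 < c → IvalMass m V a c = c * Ival m V (a * c)) ∧
      ConcaveOn ℝ (Set.Ioo (0 : ℝ) 1) (IvalMass m V a) ∧
      UniformContinuousOn (IvalMass m V a) (Set.Ioo (0 : ℝ) 1) := by
  have hV0 : ∀ x, 0 ≤ V x := by
    rcases hV with h | h
    · exact h.2.1
    · exact h.2.1
  obtain ⟨b, hab, hb⟩ := exists_strict a ha0 ha
  have hb0 : 0 < b := lt_trans ha0 hab
  have hθ1 : a / b < 1 := (div_lt_one hb0).2 hab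
  have hθ0 : 0 < a / b := div_pos ha0 hb0
  have hδ0 : 0 < 1 - a / b := by linarith
  -- Part 1: scaling identity
  have part1 : ∀ c : ℝ, 0 < c → IvalMass m V a c = c * Ival m V (a * c) := by
    intro c hc
    have himg : Dset m V a c
        = c • {e : ℝ | ∃ u : E3 → ℂ, InH12 u ∧ massSq u = 1 ∧ e = energy m V (a * c) u} := by
      ext e
      simp only [Dset, Set.mem_setOf_eq, Set.mem_smul_set, smul_eq_mul]
      constructor
      · rintro ⟨v, h1, h2, rfl⟩
        exact ⟨energy m V (a * c) v, ⟨v, h1, h2, rfl⟩, rfl⟩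
      · rintro ⟨e', ⟨v, h1, h2, rfl⟩, rfl⟩
        exact ⟨v, h1, h2, rfl⟩
    unfold IvalMass Ival
    rw [S_image m V a c hc, himg, Real.sInf_smul_of_nonneg hc.le, smul_eq_mul]
  refine ⟨part1, ?_⟩
  -- representation of IvalMass via Dset
  have hrec : ∀ c : ℝ, 0 < c → IvalMass m V a c = sInf (Dset m V a c) := by
    intro c hc
    unfold IvalMass
    rw [S_image m V a c hc]
  have henv : ∀ (c : ℝ) (v : E3 → ℂ), energy m V (a * c) v
      = kinetic m v + potentialE V v - a * c / 2 * interaction v := by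
    intro c v
    unfold energy
    ring
  by_cases hA : ∃ v : E3 → ℂ, InH12 v ∧ massSq v = 1
  · obtain ⟨v₀, hv₀, hm₀⟩ := hA
    have hmemD : ∀ (c : ℝ) (v : E3 → ℂ), InH12 v → massSq v = 1 →
        c * energy m V (a * c) v ∈ Dset m V a c := fun c v h1 h2 => ⟨v, h1, h2, rfl⟩
    have hKnn : ∀ v : E3 → ℂ, 0 ≤ kinetic m v + potentialE V v := fun v =>
      add_nonneg (kinetic_nonneg m v) (potentialE_nonneg V hV0 v)
    set M : ℝ := kinetic m v₀ + potentialE V v₀ with hM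
    have hM0 : 0 ≤ M := hKnn v₀
    -- lower bound on elements of Dset
    have hlow : ∀ c : ℝ, 0 < c → c ≤ 1 → ∀ v : E3 → ℂ, InH12 v → massSq v = 1 →
        c * (1 - a / b) * (kinetic m v + potentialE V v) ≤ c * energy m V (a * c) v := by
      intro c hc hc1 v hv h1
      have hJK := halfJ_le m hm V hV0 a b ha0 hab hb v hv h1
      have hJ0 := interaction_nonneg v
      have hK0 := hKnn v
      rw [henv]
      have hcc : c * c ≤ c := by nlinarith
      have e1 : c * c * (a / 2 * interaction v)
          ≤ c * c * (a / b * (kinetic m v + potentialE V v)) :=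
        mul_le_mul_of_nonneg_left hJK (by positivity)
      have e2 : c * c * (a / b * (kinetic m v + potentialE V v))
          ≤ c * (a / b * (kinetic m v + potentialE V v)) :=
        mul_le_mul_of_nonneg_right hcc (mul_nonneg hθ0.le hK0)
      nlinarith [e1, e2]
    have hDlb : ∀ c : ℝ, 0 < c → c ≤ 1 → ∀ e ∈ Dset m V a c, (0 : ℝ) ≤ e := by
      rintro c hc hc1 e ⟨v, h1, h2, rfl⟩
      have h3 := hlow c hc hc1 v h1 h2
      have h4 : 0 ≤ c * (1 - a / b) * (kinetic m v + potentialE V v) := by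
        have := hKnn v
        positivity
      linarith
    have hDbdd : ∀ c : ℝ, 0 < c → c ≤ 1 → BddBelow (Dset m V a c) :=
      fun c hc hc1 => ⟨0, fun e he => hDlb c hc hc1 e he⟩
    have hDne : ∀ c : ℝ, (Dset m V a c).Nonempty :=
      fun c => ⟨_, hmemD c v₀ hv₀ hm₀⟩
    have hub : ∀ c : ℝ, 0 < c → c ≤ 1 → sInf (Dset m V a c) ≤ c * M := by
      intro c hc hc1
      refine le_trans (csInf_le (hDbdd c hc hc1) (hmemD c v₀ hv₀ hm₀)) ?_
      rw [henv, ← hM]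
      have hJ0 := interaction_nonneg v₀
      nlinarith [mul_nonneg (mul_nonneg ha0.le hc.le) hJ0]
    -- near-minimizers have bounded K
    have hKbound : ∀ c : ℝ, 0 < c → c ≤ 1 → ∀ ε : ℝ, 0 < ε → ε ≤ 1 →
        ∃ v : E3 → ℂ, InH12 v ∧ massSq v = 1 ∧
          c * energy m V (a * c) v < sInf (Dset m V a c) + ε * c ∧
          kinetic m v + potentialE V v ≤ (M + 1) / (1 - a / b) := by
      intro c hc hc1 ε hε hε1
      obtain ⟨e, he, helt⟩ := exists_lt_of_csInf_lt (hDne c)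
        (show sInf (Dset m V a c) < sInf (Dset m V a c) + ε * c by nlinarith)
      obtain ⟨v, h1, h2, rfl⟩ := he
      refine ⟨v, h1, h2, helt, ?_⟩
      have h3 := hlow c hc hc1 v h1 h2
      have h4 := hub c hc hc1
      rw [le_div_iff₀ hδ0]
      have h5 : c * ((kinetic m v + potentialE V v) * (1 - a / b)) < c * (M + 1) := by
        nlinarith
      have h6 := (mul_lt_mul_iff_right₀ hc).mp h5
      linarith
    -- concavity
    have hconc : ConcaveOn ℝ (Set.Ioo (0 : ℝ) 1) (IvalMass m V a) := by
      refine ⟨convex_Ioo 0 1, ?_⟩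
      intro x hx y hy t s ht hs hts
      have hz : t • x + s • y ∈ Set.Ioo (0 : ℝ) 1 := (convex_Ioo (0 : ℝ) 1) hx hy ht hs hts
      simp only [smul_eq_mul] at hz ⊢
      rw [hrec x hx.1, hrec y hy.1, hrec _ hz.1]
      refine le_csInf (hDne _) ?_
      rintro e ⟨v, h1, h2, rfl⟩
      obtain rfl : s = 1 - t := by linarith
      have h1t : (0 : ℝ) ≤ 1 - t := hs
      have hJ0 := interaction_nonneg v
      have hK0 := hKnn v
      have hx' := csInf_le (hDbdd x hx.1 hx.2.le) (hmemD x v h1 h2)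
      have hy' := csInf_le (hDbdd y hy.1 hy.2.le) (hmemD y v h1 h2)
      rw [henv x v] at hx'
      rw [henv y v] at hy'
      rw [henv (t * x + (1 - t) * y) v]
      have e1 : t * sInf (Dset m V a x) ≤ t * (x * (kinetic m v + potentialE V v
          - a * x / 2 * interaction v)) := mul_le_mul_of_nonneg_left hx' ht
      have e2 : (1 - t) * sInf (Dset m V a y) ≤ (1 - t) * (y * (kinetic m v + potentialE V v
          - a * y / 2 * interaction v)) := mul_le_mul_of_nonneg_left hy' h1t
      have e3 : (0 : ℝ) ≤ a * interaction v * (t * (1 - t)) * (x - y) ^ 2 :=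
        mul_nonneg (mul_nonneg (mul_nonneg ha0.le hJ0) (mul_nonneg ht h1t)) (sq_nonneg _)
      nlinarith [e1, e2, e3]
    -- Lipschitz estimate
    set L : ℝ := 1 + 2 * ((M + 1) / (1 - a / b)) with hL
    have hQ0 : 0 ≤ (M + 1) / (1 - a / b) := by positivity
    have hL0 : 0 ≤ L := by rw [hL]; linarith [hQ0]
    have hstep : ∀ c c' : ℝ, c ∈ Set.Ioo (0 : ℝ) 1 → c' ∈ Set.Ioo (0 : ℝ) 1 → c < c' →
        |sInf (Dset m V a c') - sInf (Dset m V a c)| ≤ L * (c' - c) := by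
      intro c c' hcm hcm' hcc
      obtain ⟨hc0, hc1⟩ := hcm
      obtain ⟨hc'0, hc'1⟩ := hcm'
      have hd : 0 < c' - c := sub_pos.2 hcc
      have hd1 : c' - c ≤ 1 := by linarith
      rw [abs_sub_le_iff]
      constructor
      · -- sInf (D c') - sInf (D c) ≤ L * (c' - c)
        obtain ⟨v, h1, h2, hlt, hKb⟩ := hKbound c hc0 hc1.le (c' - c) hd hd1
        have hmem := csInf_le (hDbdd c' hc'0 hc'1.le) (hmemD c' v h1 h2)
        have hJ0 := interaction_nonneg v
        have hK0 := hKnn v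
        rw [henv c v] at hlt
        rw [henv c' v] at hmem
        have H1 : (0 : ℝ) ≤ a * interaction v * (c' ^ 2 - c ^ 2) :=
          mul_nonneg (mul_nonneg ha0.le hJ0) (by nlinarith)
        have key : c' * (kinetic m v + potentialE V v - a * c' / 2 * interaction v)
            - c * (kinetic m v + potentialE V v - a * c / 2 * interaction v)
            ≤ (c' - c) * (kinetic m v + potentialE V v) := by nlinarith [H1]
        have H2 : (c' - c) * (kinetic m v + potentialE V v)
            ≤ (c' - c) * ((M + 1) / (1 - a / b)) := mul_le_mul_of_nonneg_left hKb hd.le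
        have H3 : (c' - c) * c ≤ (c' - c) * 1 := by nlinarith
        have H4 : (0 : ℝ) ≤ (c' - c) * ((M + 1) / (1 - a / b)) := mul_nonneg hd.le hQ0
        rw [hL]
        nlinarith [hmem, hlt, key, H2, H3, H4]
      · -- sInf (D c) - sInf (D c') ≤ L * (c' - c)
        obtain ⟨v, h1, h2, hlt, hKb⟩ := hKbound c' hc'0 hc'1.le (c' - c) hd hd1
        have hmem := csInf_le (hDbdd c hc0 hc1.le) (hmemD c v h1 h2)
        have hJK := halfJ_le m hm V hV0 a b ha0 hab hb v h1 h2
        have hJ0 := interaction_nonneg v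
        have hK0 := hKnn v
        rw [henv c' v] at hlt
        rw [henv c v] at hmem
        have Hq : c' ^ 2 - c ^ 2 ≤ 2 * (c' - c) := by nlinarith
        have Hr : a / 2 * interaction v * (c' ^ 2 - c ^ 2)
            ≤ a / 2 * interaction v * (2 * (c' - c)) :=
          mul_le_mul_of_nonneg_left Hq (by positivity)
        have Hs : (c' - c) * (a / 2 * interaction v)
            ≤ (c' - c) * (a / b * (kinetic m v + potentialE V v)) :=
          mul_le_mul_of_nonneg_left hJK hd.le
        have Ht : (c' - c) * (a / b * (kinetic m v + potentialE V v))
            ≤ (c' - c) * (kinetic m v + potentialE V v) :=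
          mul_le_mul_of_nonneg_left (by nlinarith) hd.le
        have key : c * (kinetic m v + potentialE V v - a * c / 2 * interaction v)
            - c' * (kinetic m v + potentialE V v - a * c' / 2 * interaction v)
            ≤ (c' - c) * (2 * (kinetic m v + potentialE V v)) := by
          nlinarith [Hr, Hs, Ht]
        have H2 : (c' - c) * (2 * (kinetic m v + potentialE V v))
            ≤ (c' - c) * (2 * ((M + 1) / (1 - a / b))) := by
          refine mul_le_mul_of_nonneg_left ?_ hd.le
          linarith
        have H3 : (c' - c) * c' ≤ (c' - c) * 1 := by nlinarith
        rw [hL]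
        nlinarith [hmem, hlt, key, H2, H3]
    have hlip : LipschitzOnWith (Real.toNNReal L) (IvalMass m V a) (Set.Ioo (0 : ℝ) 1) := by
      rw [lipschitzOnWith_iff_dist_le_mul]
      intro x hx y hy
      rw [Real.dist_eq, Real.dist_eq, Real.coe_toNNReal L hL0,
        hrec x hx.1, hrec y hy.1]
      rcases lt_trichotomy x y with h | h | h
      · have hst := hstep x y hx hy h
        rw [abs_sub_comm]
        calc |sInf (Dset m V a y) - sInf (Dset m V a x)| ≤ L * (y - x) := hst
          _ = L * |x - y| := by rw [abs_sub_comm, abs_of_pos (by linarith : (0:ℝ) < y - x)]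
      · rw [h]
        simp
      · have hst := hstep y x hy hx h
        calc |sInf (Dset m V a x) - sInf (Dset m V a y)| ≤ L * (x - y) := hst
          _ = L * |x - y| := by rw [abs_of_pos (by linarith : (0:ℝ) < x - y)]
    exact ⟨hconc, hlip.uniformContinuousOn⟩
  · -- degenerate case: no admissible function at all
    have hzero : ∀ c : ℝ, 0 < c → IvalMass m V a c = 0 := by
      intro c hc
      have hempty : Dset m V a c = (∅ : Set ℝ) := by
        ext e
        simp only [Dset, Set.mem_setOf_eq, Set.mem_empty_iff_false, iff_false]
        rintro ⟨v, h1, h2, -⟩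
        exact hA ⟨v, h1, h2⟩
      rw [hrec c hc, hempty, Real.sInf_empty]
    constructor
    · refine ⟨convex_Ioo 0 1, ?_⟩
      intro x hx y hy t s ht hs hts
      have hz : t • x + s • y ∈ Set.Ioo (0 : ℝ) 1 := (convex_Ioo (0 : ℝ) 1) hx hy ht hs hts
      simp only [smul_eq_mul] at hz ⊢
      rw [hzero x hx.1, hzero y hy.1, hzero _ hz.1]
      simp
    · have hlip : LipschitzOnWith 0 (IvalMass m V a) (Set.Ioo (0 : ℝ) 1) := by
        rw [lipschitzOnWith_iff_dist_le_mul]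
        intro x hx y hy
        rw [hzero x hx.1, hzero y hy.1]
        simp
      exact hlip.uniformContinuousOn
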